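/- For every choice of projection functions g₊, g₋ : 𝒞 → ℝ^{d_z} and every measurable critic ψ for which the quantities I_NCE^{self-p} and R are finite, the projection-based InfoNCE loss bounds mutual information as I(X;C) ≥ 1 + log N − I_NCE^{self-p} − R. (Proposition 1, the ProjNCE mutual-information bound.) -/

import Mathlib

open MeasureTheory ProbabilityTheory Filter
open scoped Classical ENNReal Topology

/-- The Kullback–Leibler divergence `KL(P‖Q) = ∫ log (dP/dQ) dP`, with value `+∞`
when `P` is not absolutely continuous with respect to `Q` (or the integral is undefined). -/
noncomputable def klDivergence {Ω : Type*} [MeasurableSpace Ω] (P Q : Measure Ω) : EReal :=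
  if P ≪ Q ∧ Integrable (fun ω => Real.log ((P.rnDeriv Q ω).toReal)) P
  then ((∫ ω, Real.log ((P.rnDeriv Q ω).toReal) ∂P : ℝ) : EReal)
  else ⊤

/-- The mutual information `I(X;C) := KL(law(X,C) ‖ law(X) ⊗ law(C))`. -/
noncomputable def mutualInfo {Ω 𝓧 𝒞 : Type*} [MeasurableSpace Ω] [MeasurableSpace 𝓧]
    [MeasurableSpace 𝒞] (μ : Measure Ω) (X : Ω → 𝓧) (C : Ω → 𝒞) : EReal :=
  klDivergence (μ.map (fun ω => (X ω, C ω))) ((μ.map X).prod (μ.map C))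

/-- The conditional law of `X` given `C = c`. -/
noncomputable def condLaw {Ω 𝓧 𝒞 : Type*} [MeasurableSpace Ω] [MeasurableSpace 𝓧]
    [MeasurableSpace 𝒞] (μ : Measure Ω) (X : Ω → 𝓧) (C : Ω → 𝒞) (c : 𝒞) : Measure 𝓧 :=
  (μ[|C ⁻¹' {c}]).map X

/-- The law `P_i` of `(X, (C_1, …, C_N))` under which `C_1, …, C_N` are i.i.d. copies of `C`
and `X` is drawn from the conditional law of `X` given `C = C_i`, conditionally
independently of the other `C_j`. -/
noncomputable def Pmeas {Ω 𝓧 𝒞 : Type*} [MeasurableSpace Ω] [MeasurableSpace 𝓧]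
    [MeasurableSpace 𝒞] (μ : Measure Ω) (X : Ω → 𝓧) (C : Ω → 𝒞) (N : ℕ) (i : Fin N) :
    Measure (𝓧 × (Fin N → 𝒞)) :=
  (Measure.pi fun _ : Fin N => μ.map C).bind
    (fun cs => (condLaw μ X C (cs i)).map (fun x => (x, cs)))

/-- The law `Q` of `(X, (C_1, …, C_N))` under which `X` has the marginal law of `X` and is
independent of `C_1, …, C_N`, which are i.i.d. copies of `C`. -/
noncomputable def Qmeas {Ω 𝓧 𝒞 : Type*} [MeasurableSpace Ω] [MeasurableSpace 𝓧]
    [MeasurableSpace 𝒞] (μ : Measure Ω) (X : Ω → 𝓧) (C : Ω → 𝒞) (N : ℕ) :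
    Measure (𝓧 × (Fin N → 𝒞)) :=
  (μ.map X).prod (Measure.pi fun _ : Fin N => μ.map C)

theorem test : True := trivial

/-- withDensity commutes with pushforward by a measurable embedding. -/
lemma withDensity_map_emb {α β : Type*} [MeasurableSpace α] [MeasurableSpace β]
    {g : α → β} (hg : MeasurableEmbedding g) (m : Measure α) (F : β → ℝ≥0∞)
    (hF : Measurable F) :
    (m.map g).withDensity F = (m.withDensity (F ∘ g)).map g := by
  ext s hs
  rw [withDensity_apply _ hs, hg.map_apply, withDensity_apply _ (hg.measurable hs),
    setLIntegral_map hs hF hg.measurable]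
  rfl

/-- A product measure with a measure on a finite discrete space decomposes as a finite
sum of scaled embeddings. -/
lemma prod_decomp {𝓧 β : Type*} [MeasurableSpace 𝓧] [MeasurableSpace β]
    [Fintype β] [MeasurableSingletonClass β] (ν : Measure 𝓧) [SFinite ν] (m : Measure β) :
    ν.prod m = ∑ b : β, m {b} • ν.map (fun x => (x, b)) := by
  have hsmul : ∀ (c : ℝ≥0∞) (m' : Measure β) (_ : SFinite m'),
      ν.prod (c • m') = c • ν.prod m' := by
    intro c m' hm'
    ext s hs
    simp only [Measure.prod_apply hs, Measure.smul_apply, smul_eq_mul]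
    rw [← lintegral_const_mul _ (measurable_measure_prodMk_left hs)]
  conv_lhs => rw [← Measure.sum_smul_dirac m, Measure.prod_sum_right]
  rw [Measure.sum_fintype]
  congr 1
  ext b : 1
  rw [hsmul _ _ inferInstance, Measure.prod_dirac]

/-- The NWJ / Donsker–Varadhan-type variational lower bound for a single pair of measures. -/
lemma nwj_bound {𝓧 : Type*} [MeasurableSpace 𝓧] (ν lam : Measure 𝓧)
    [IsProbabilityMeasure ν] [IsProbabilityMeasure lam] (hac : ν ≪ lam)
    {h : 𝓧 → ℝ} (hmeas : Measurable h) (hpos : ∀ x, 0 < h x)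
    (hT : Integrable (fun x => Real.log (h x)) ν)
    (hL : Integrable (fun x => Real.log ((ν.rnDeriv lam x).toReal)) ν)
    (hh : Integrable h lam) :
    ∫ x, Real.log (h x) ∂ν - ∫ x, Real.log ((ν.rnDeriv lam x).toReal) ∂ν + 1
      ≤ ∫ x, h x ∂lam := by
  set ρ : 𝓧 → ℝ≥0∞ := ν.rnDeriv lam with hρ
  have hρmeas : Measurable ρ := Measure.measurable_rnDeriv ν lam
  have hρpos : ∀ᵐ x ∂ν, 0 < ρ x := Measure.rnDeriv_pos hac
  have hρlt : ∀ᵐ x ∂ν, ρ x < ∞ := hac.ae_le (Measure.rnDeriv_lt_top ν lam)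
  set q : 𝓧 → ℝ := fun x => h x / (ρ x).toReal with hq
  have hqmeas : Measurable q := hmeas.div hρmeas.ennreal_toReal
  have hqnonneg : ∀ x, 0 ≤ q x := fun x =>
    div_nonneg (hpos x).le ENNReal.toReal_nonneg
  have hν_eq : ν = lam.withDensity ρ := (Measure.withDensity_rnDeriv_eq ν lam hac).symm
  have hlin : ∫⁻ x, ENNReal.ofReal (q x) ∂ν ≤ ∫⁻ x, ENNReal.ofReal (h x) ∂lam := by
    conv_lhs => rw [hν_eq]
    rw [lintegral_withDensity_eq_lintegral_mul lam hρmeas hqmeas.ennreal_ofReal]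
    refine lintegral_mono fun x => ?_
    by_cases h0 : ρ x = 0
    · simp [h0]
    by_cases htop : ρ x = ∞
    · simp [hq, htop]
    · have hρt : (ρ x).toReal ≠ 0 := ENNReal.toReal_ne_zero.mpr ⟨h0, htop⟩
      simp only [Pi.mul_apply]
      rw [hq]
      conv_lhs => rw [← ENNReal.ofReal_toReal htop]
      rw [← ENNReal.ofReal_mul ENNReal.toReal_nonneg]
      rw [mul_div_cancel₀ _ hρt]
  have hlam_fin : ∫⁻ x, ENNReal.ofReal (h x) ∂lam < ∞ := by
    calc ∫⁻ x, ENNReal.ofReal (h x) ∂lam ≤ ∫⁻ x, (‖h x‖₊ : ℝ≥0∞) ∂lam :=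
      lintegral_mono fun x => ENNReal.ofReal_le_of_le_toReal (by
        simp [Real.norm_eq_abs, le_abs_self])
    _ < ∞ := hh.2
  have hq_int : Integrable q ν := by
    refine ⟨hqmeas.aestronglyMeasurable, ?_⟩
    rw [HasFiniteIntegral]
    calc ∫⁻ x, (‖q x‖₊ : ℝ≥0∞) ∂ν = ∫⁻ x, ENNReal.ofReal (q x) ∂ν := by
          refine lintegral_congr fun x => ?_
          exact Real.enorm_eq_ofReal (hqnonneg x)
    _ ≤ _ := hlin
    _ < ∞ := hlam_fin
  have hptwise : ∀ᵐ x ∂ν,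
      Real.log (h x) - Real.log ((ρ x).toReal) + 1 ≤ q x := by
    filter_upwards [hρpos, hρlt] with x hx0 hxt
    have hρt : 0 < (ρ x).toReal := ENNReal.toReal_pos hx0.ne' hxt.ne
    have hqpos : 0 < q x := div_pos (hpos x) hρt
    have := Real.log_le_sub_one_of_pos hqpos
    rw [hq] at this ⊢
    rw [Real.log_div (hpos x).ne' hρt.ne'] at this
    linarith
  have hint1 : Integrable (fun x => Real.log (h x) - Real.log ((ρ x).toReal) + 1) ν := by
    have hsub : Integrable (fun x => Real.log (h x) - Real.log ((ρ x).toReal)) ν := hT.sub hL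
    exact hsub.add (integrable_const 1)
  have hmono := integral_mono_ae hint1 hq_int hptwise
  have hsplit : ∫ x, (Real.log (h x) - Real.log ((ρ x).toReal) + 1) ∂ν
      = ∫ x, Real.log (h x) ∂ν - ∫ x, Real.log ((ρ x).toReal) ∂ν + 1 := by
    have hsub : Integrable (fun x => Real.log (h x) - Real.log ((ρ x).toReal)) ν := hT.sub hL
    rw [integral_add hsub (integrable_const 1), integral_sub hT hL, integral_const]
    simp
  rw [hsplit] at hmono
  refine hmono.trans ?_
  have h1 : ∫ x, q x ∂ν = (∫⁻ x, ENNReal.ofReal (q x) ∂ν).toReal := by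
    rw [integral_eq_lintegral_of_nonneg_ae (Filter.Eventually.of_forall hqnonneg)
      hqmeas.aestronglyMeasurable]
  have h2 : ∫ x, h x ∂lam = (∫⁻ x, ENNReal.ofReal (h x) ∂lam).toReal := by
    rw [integral_eq_lintegral_of_nonneg_ae (Filter.Eventually.of_forall fun x => (hpos x).le)
      hmeas.aestronglyMeasurable]
  rw [h1, h2]
  exact ENNReal.toReal_mono hlam_fin.ne hlin

/-- Proposition 1, the ProjNCE mutual-information bound:
for every choice of projections `g₊, g₋ : 𝒞 → ℝ^{d_z}` and every measurable critic `ψ`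
for which `I_NCE^{self-p}` and `R` are finite,
`I(X;C) ≥ 1 + log N − I_NCE^{self-p} − R`. -/
theorem stmt_2 {Ω 𝓧 : Type*} [MeasurableSpace Ω] [MeasurableSpace 𝓧]
    {M dz : ℕ} (μ : Measure Ω) [IsProbabilityMeasure μ]
    (X : Ω → 𝓧) (C : Ω → Fin M) (hX : Measurable X) (hC : Measurable C)
    (hpos : ∀ c : Fin M, 0 < μ (C ⁻¹' {c}))
    (N : ℕ) (hN : 1 ≤ N)
    (f : 𝓧 → EuclideanSpace ℝ (Fin dz)) (hf : Measurable f)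
    (gp gm : Fin M → EuclideanSpace ℝ (Fin dz))
    (ψ : EuclideanSpace ℝ (Fin dz) → EuclideanSpace ℝ (Fin dz) → ℝ)
    (hψ : Measurable (fun p : EuclideanSpace ℝ (Fin dz) × EuclideanSpace ℝ (Fin dz) =>
      ψ p.1 p.2))
    (hintP : ∀ i : Fin N, Integrable (fun p : 𝓧 × (Fin N → Fin M) =>
      -Real.log (Real.exp (ψ (f p.1) (gp (p.2 i))) /
        ∑ j : Fin N, Real.exp (ψ (f p.1) (gm (p.2 j))))) (Pmeas μ X C N i))
    (hintQ : Integrable (fun p : 𝓧 × (Fin N → Fin M) =>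
      (∑ k : Fin N, Real.exp (ψ (f p.1) (gp (p.2 k)))) /
        ∑ k : Fin N, Real.exp (ψ (f p.1) (gm (p.2 k)))) (Qmeas μ X C N)) :
    ((1 + Real.log N
        - (1 / N) * ∑ i : Fin N, ∫ p, -Real.log (Real.exp (ψ (f p.1) (gp (p.2 i))) /
            ∑ j : Fin N, Real.exp (ψ (f p.1) (gm (p.2 j)))) ∂(Pmeas μ X C N i)
        - ∫ p, (∑ k : Fin N, Real.exp (ψ (f p.1) (gp (p.2 k)))) /
            (∑ k : Fin N, Real.exp (ψ (f p.1) (gm (p.2 k)))) ∂(Qmeas μ X C N) : ℝ) : EReal)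
      ≤ mutualInfo μ X C := by
  have hNpos : (0:ℝ) < (N:ℝ) := by exact_mod_cast hN
  haveI : NeZero N := ⟨Nat.one_le_iff_ne_zero.mp hN⟩
  -- notation
  set π : Measure (Fin M) := μ.map C with hπdef
  set μX : Measure 𝓧 := μ.map X with hμXdef
  set νc : Fin M → Measure 𝓧 := fun c => condLaw μ X C c with hνcdef
  set πN : Measure (Fin N → Fin M) := Measure.pi (fun _ : Fin N => π) with hπNdef
  set joint : Measure (𝓧 × Fin M) := μ.map (fun ω => (X ω, C ω)) with hjointdef
  haveI : IsProbabilityMeasure π := Measure.isProbabilityMeasure_map hC.aemeasurable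
  haveI : IsProbabilityMeasure μX := Measure.isProbabilityMeasure_map hX.aemeasurable
  haveI : IsProbabilityMeasure joint :=
    Measure.isProbabilityMeasure_map (hX.prodMk hC).aemeasurable
  haveI : IsProbabilityMeasure πN := by infer_instance
  have hνcprob : ∀ c, IsProbabilityMeasure (νc c) := by
    intro c
    haveI : IsProbabilityMeasure (μ[|C ⁻¹' {c}]) :=
      cond_isProbabilityMeasure (hpos c).ne'
    exact Measure.isProbabilityMeasure_map hX.aemeasurable
  -- basic facts about weights
  have hpc : ∀ c, π {c} = μ (C ⁻¹' {c}) := fun c =>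
    Measure.map_apply hC (measurableSet_singleton c)
  have hpc_pos : ∀ c, 0 < π {c} := fun c => (hpc c) ▸ hpos c
  have hpc_ne_top : ∀ c, π {c} ≠ ∞ := fun c => measure_ne_top π {c}
  have hw : ∀ cs : Fin N → Fin M, πN {cs} = ∏ j, π {cs j} := by
    intro cs
    rw [hπNdef, ← Set.univ_pi_singleton cs, Measure.pi_pi]
  have hw_pos : ∀ cs : Fin N → Fin M, 0 < πN {cs} := by
    intro cs
    rw [hw]
    exact CanonicallyOrderedAdd.prod_pos.mpr fun j _ => hpc_pos (cs j)
  have hw_ne_top : ∀ cs : Fin N → Fin M, πN {cs} ≠ ∞ := fun cs => measure_ne_top πN {cs}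
  have hprsumE : ∑ c : Fin M, π {c} = 1 := by
    calc ∑ c : Fin M, π {c}
        = (Measure.sum fun c : Fin M => π {c} • Measure.dirac c) Set.univ := by
          rw [Measure.sum_apply _ MeasurableSet.univ, tsum_fintype]
          simp [Measure.smul_apply]
      _ = π Set.univ := by rw [Measure.sum_smul_dirac]
      _ = 1 := measure_univ
  have hprsum : ∑ c : Fin M, (π {c}).toReal = 1 := by
    rw [← ENNReal.toReal_sum (fun c _ => hpc_ne_top c), hprsumE, ENNReal.toReal_one]
  have hwr_prod : ∀ cs : Fin N → Fin M,
      (πN {cs}).toReal = ∏ j, (π {cs j}).toReal := by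
    intro cs; rw [hw, ENNReal.toReal_prod]
  -- decomposition of the joint law
  have hjoint_dec : joint = ∑ c : Fin M, π {c} • (νc c).map (fun x => (x, c)) := by
    ext s hs
    rw [hjointdef, Measure.map_apply (hX.prodMk hC) hs, Measure.finset_sum_apply]
    have hAmeas : ∀ c : Fin M, MeasurableSet ((fun x => (x, c)) ⁻¹' s) :=
      fun c => (measurableEmbedding_prod_mk_right c).measurable hs
    have hterm : ∀ c : Fin M, (π {c} • (νc c).map (fun x => (x, c))) s
        = μ (C ⁻¹' {c} ∩ X ⁻¹' ((fun x => (x, c)) ⁻¹' s)) := by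
      intro c
      rw [Measure.smul_apply, smul_eq_mul,
        Measure.map_apply measurable_prodMk_right hs]
      simp only [hνcdef, condLaw]
      rw [Measure.map_apply hX (hAmeas c),
        cond_apply (hC (measurableSet_singleton c)) μ, hpc, ← mul_assoc,
        ENNReal.mul_inv_cancel (hpos c).ne' (measure_ne_top μ _), one_mul]
    simp only [hterm]
    have hset : ∀ c : Fin M, C ⁻¹' {c} ∩ X ⁻¹' ((fun x => (x, c)) ⁻¹' s)
        = C ⁻¹' {c} ∩ ((fun ω => (X ω, C ω)) ⁻¹' s) := by
      intro c
      ext ω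
      simp only [Set.mem_inter_iff, Set.mem_preimage, Set.mem_singleton_iff]
      constructor
      · rintro ⟨h1, h2⟩; exact ⟨h1, by rwa [← h1] at h2⟩
      · rintro ⟨h1, h2⟩; exact ⟨h1, by rwa [h1] at h2⟩
    simp only [hset]
    have hpre : MeasurableSet ((fun ω => (X ω, C ω)) ⁻¹' s) := (hX.prodMk hC) hs
    have hcover : (⋃ c : Fin M, C ⁻¹' {c} ∩ ((fun ω => (X ω, C ω)) ⁻¹' s))
        = (fun ω => (X ω, C ω)) ⁻¹' s := by
      rw [← Set.iUnion_inter]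
      have : (⋃ c : Fin M, C ⁻¹' {c}) = Set.univ := by
        ext ω
        simp only [Set.mem_iUnion, Set.mem_preimage, Set.mem_singleton_iff, Set.mem_univ,
          iff_true]
        exact ⟨C ω, rfl⟩
      rw [this, Set.univ_inter]
    have hdisj : Pairwise (Function.onFun Disjoint
        fun c : Fin M => C ⁻¹' {c} ∩ ((fun ω => (X ω, C ω)) ⁻¹' s)) := by
      intro c c' hcc'
      refine Set.disjoint_left.mpr ?_
      rintro ω ⟨h1, -⟩ ⟨h2, -⟩
      exact hcc' (h1.symm.trans h2)
    calc μ ((fun ω => (X ω, C ω)) ⁻¹' s)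
        = μ (⋃ c : Fin M, C ⁻¹' {c} ∩ ((fun ω => (X ω, C ω)) ⁻¹' s)) := by rw [hcover]
      _ = ∑' c : Fin M, μ (C ⁻¹' {c} ∩ ((fun ω => (X ω, C ω)) ⁻¹' s)) :=
          measure_iUnion hdisj fun c => (hC (measurableSet_singleton c)).inter hpre
      _ = ∑ c : Fin M, μ (C ⁻¹' {c} ∩ ((fun ω => (X ω, C ω)) ⁻¹' s)) := tsum_fintype _
  have hprod_dec : μX.prod π = ∑ c : Fin M, π {c} • μX.map (fun x => (x, c)) :=
    prod_decomp μX π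
  have hP_dec : ∀ i : Fin N, Pmeas μ X C N i
      = ∑ cs : Fin N → Fin M, πN {cs} • (νc (cs i)).map (fun x => (x, cs)) := by
    intro i
    ext s hs
    rw [Pmeas, Measure.bind_apply hs Measurable.of_discrete.aemeasurable, lintegral_fintype,
      Measure.finset_sum_apply]
    refine Finset.sum_congr rfl fun cs _ => ?_
    rw [Measure.smul_apply, smul_eq_mul, mul_comm, hπNdef, hνcdef, hπdef]
  have hQ_dec : Qmeas μ X C N
      = ∑ cs : Fin N → Fin M, πN {cs} • μX.map (fun x => (x, cs)) := prod_decomp μX πN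
  -- the main dichotomy
  rw [mutualInfo, klDivergence]
  split_ifs with hcase
  swap
  · exact le_top
  obtain ⟨hac, hint⟩ := hcase
  rw [← hjointdef, ← hμXdef, ← hπdef] at hac hint
  rw [EReal.coe_le_coe_iff]
  -- absolute continuity of components
  have hacc : ∀ c, νc c ≪ μX := by
    intro c
    refine Measure.AbsolutelyContinuous.mk fun A hA h0 => ?_
    have hprod0 : (μX.prod π) (A ×ˢ ({c} : Set (Fin M))) = 0 := by
      rw [Measure.prod_prod, h0, zero_mul]
    have hj0 := hac hprod0
    rw [hjoint_dec, Measure.finset_sum_apply] at hj0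
    have hterm := (Finset.sum_eq_zero_iff.mp hj0) c (Finset.mem_univ c)
    rw [Measure.smul_apply, smul_eq_mul,
      Measure.map_apply measurable_prodMk_right (hA.prod (measurableSet_singleton c))] at hterm
    have hpreim : (fun x => (x, c)) ⁻¹' (A ×ˢ ({c} : Set (Fin M))) = A := by
      ext x; simp
    rw [hpreim] at hterm
    rcases mul_eq_zero.mp hterm with h | h
    · exact absurd h (hpc_pos c).ne'
    · exact h
  -- identification of the Radon–Nikodym derivative
  set F : 𝓧 × Fin M → ℝ≥0∞ := fun y => ((νc y.2).rnDeriv μX) y.1 with hFdef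
  have hFmeas : Measurable F :=
    measurable_from_prod_countable_left fun c => Measure.measurable_rnDeriv (νc c) μX
  have hWD : joint = (μX.prod π).withDensity F := by
    have hstep : (μX.prod π).withDensity F
        = ∑ c : Fin M, π {c} • ((μX.map (fun x => (x, c))).withDensity F) := by
      rw [hprod_dec, ← Measure.sum_fintype, ← Measure.sum_fintype, withDensity_sum]
      congr 1
      ext c : 1
      rw [withDensity_smul_measure]
    rw [hstep, hjoint_dec]
    refine Finset.sum_congr rfl fun c _ => ?_
    congr 1
    rw [withDensity_map_emb (measurableEmbedding_prod_mk_right c) μX F hFmeas]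
    congr 1
    exact (Measure.withDensity_rnDeriv_eq _ _ (hacc c)).symm
  have hFae : (fun y => Real.log ((joint.rnDeriv (μX.prod π) y).toReal))
      =ᵐ[joint] fun y => Real.log ((F y).toReal) := by
    have h1 : joint.rnDeriv (μX.prod π) =ᵐ[μX.prod π] F := by
      conv_lhs => rw [hWD]
      exact Measure.rnDeriv_withDensity (μX.prod π) hFmeas
    have h2 : joint.rnDeriv (μX.prod π) =ᵐ[joint] F := h1.filter_mono hac.ae_le
    filter_upwards [h2] with y hy
    rw [hy]
  -- integrability of the log-density components
  have hintF : Integrable (fun y => Real.log ((F y).toReal)) joint := hint.congr hFae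
  have hLint : ∀ c, Integrable (fun x => Real.log (((νc c).rnDeriv μX x).toReal)) (νc c) := by
    intro c
    have hintF' := hintF
    rw [hjoint_dec] at hintF'
    have h1 := integrable_finset_sum_measure.mp hintF' c (Finset.mem_univ c)
    have h2 := (integrable_smul_measure (hpc_pos c).ne' (hpc_ne_top c)).mp h1
    exact ((measurableEmbedding_prod_mk_right c).integrable_map_iff).mp h2
  have hMI : ∫ y, Real.log ((joint.rnDeriv (μX.prod π) y).toReal) ∂joint
      = ∑ c : Fin M, (π {c}).toReal * ∫ x, Real.log (((νc c).rnDeriv μX x).toReal) ∂(νc c) := by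
    rw [integral_congr_ae hFae]
    have hintF' := hintF
    rw [hjoint_dec] at hintF'
    conv_lhs => rw [hjoint_dec]
    rw [integral_finset_sum_measure (fun c _ => integrable_finset_sum_measure.mp hintF' c
      (Finset.mem_univ c))]
    refine Finset.sum_congr rfl fun c _ => ?_
    rw [integral_smul_measure, (measurableEmbedding_prod_mk_right c).integral_map, smul_eq_mul]
  -- The critic components
  haveI : Nonempty (Fin N) := ⟨⟨0, hN⟩⟩
  have hexp : ∀ v : EuclideanSpace ℝ (Fin dz), Measurable fun x => Real.exp (ψ (f x) v) :=
    fun v => (hψ.comp (hf.prodMk measurable_const)).exp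
  have hD_pos : ∀ (cs : Fin N → Fin M) (x : 𝓧),
      0 < ∑ j : Fin N, Real.exp (ψ (f x) (gm (cs j))) :=
    fun cs x => Finset.sum_pos (fun j _ => Real.exp_pos _) Finset.univ_nonempty
  have hE_pos : ∀ (cs : Fin N → Fin M) (k : Fin N) (x : 𝓧),
      0 < Real.exp (ψ (f x) (gp (cs k))) / ∑ j : Fin N, Real.exp (ψ (f x) (gm (cs j))) :=
    fun cs k x => div_pos (Real.exp_pos _) (hD_pos cs x)
  have hE_meas : ∀ (cs : Fin N → Fin M) (k : Fin N),
      Measurable (fun x => Real.exp (ψ (f x) (gp (cs k)))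
        / ∑ j : Fin N, Real.exp (ψ (f x) (gm (cs j)))) :=
    fun cs k => (hexp _).div (Finset.measurable_sum _ fun j _ => hexp _)
  -- integrability of the log-ratios under the conditional laws
  have hTint : ∀ (i : Fin N) (cs : Fin N → Fin M),
      Integrable (fun x => Real.log (Real.exp (ψ (f x) (gp (cs i)))
        / ∑ j : Fin N, Real.exp (ψ (f x) (gm (cs j))))) (νc (cs i)) := by
    intro i cs
    have h := hintP i
    rw [hP_dec i] at h
    have h1 := integrable_finset_sum_measure.mp h cs (Finset.mem_univ cs)
    have h2 := (integrable_smul_measure (hw_pos cs).ne' (hw_ne_top cs)).mp h1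
    have h3 := ((measurableEmbedding_prod_mk_right cs).integrable_map_iff).mp h2
    have h4 : Integrable (fun x => -Real.log (Real.exp (ψ (f x) (gp (cs i)))
        / ∑ j : Fin N, Real.exp (ψ (f x) (gm (cs j))))) (νc (cs i)) := h3
    exact h4.neg.congr (Eventually.of_forall fun x => by simp)
  -- integrability of the ratio functions under μX
  have hHint : ∀ cs : Fin N → Fin M,
      Integrable (fun x => (∑ k : Fin N, Real.exp (ψ (f x) (gp (cs k))))
        / ∑ k : Fin N, Real.exp (ψ (f x) (gm (cs k)))) μX := by
    intro cs
    have h := hintQ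
    rw [hQ_dec] at h
    have h1 := integrable_finset_sum_measure.mp h cs (Finset.mem_univ cs)
    have h2 := (integrable_smul_measure (hw_pos cs).ne' (hw_ne_top cs)).mp h1
    exact ((measurableEmbedding_prod_mk_right cs).integrable_map_iff).mp h2
  have hEint : ∀ (cs : Fin N → Fin M) (k : Fin N),
      Integrable (fun x => Real.exp (ψ (f x) (gp (cs k)))
        / ∑ j : Fin N, Real.exp (ψ (f x) (gm (cs j)))) μX := by
    intro cs k
    refine (hHint cs).mono (hE_meas cs k).aestronglyMeasurable ?_
    refine Eventually.of_forall fun x => ?_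
    rw [Real.norm_eq_abs, Real.norm_eq_abs, abs_of_pos (hE_pos cs k x),
      abs_of_pos (div_pos (Finset.sum_pos (fun j _ => Real.exp_pos _) Finset.univ_nonempty)
        (hD_pos cs x))]
    exact (div_le_div_iff_of_pos_right (hD_pos cs x)).mpr
      (Finset.single_le_sum (fun j _ => (Real.exp_pos (ψ (f x) (gp (cs j)))).le)
        (Finset.mem_univ k))
  -- the NWJ bound per summand
  have key : ∀ (i : Fin N) (cs : Fin N → Fin M),
      Real.log (N:ℝ) + (∫ x, Real.log (Real.exp (ψ (f x) (gp (cs i)))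
          / ∑ j : Fin N, Real.exp (ψ (f x) (gm (cs j)))) ∂(νc (cs i)))
        - (∫ x, Real.log (((νc (cs i)).rnDeriv μX x).toReal) ∂(νc (cs i))) + 1
        ≤ (N:ℝ) * ∫ x, Real.exp (ψ (f x) (gp (cs i)))
          / ∑ j : Fin N, Real.exp (ψ (f x) (gm (cs j))) ∂μX := by
    intro i cs
    haveI := hνcprob (cs i)
    have hTeq : (fun x => Real.log (N:ℝ) + Real.log (Real.exp (ψ (f x) (gp (cs i)))
        / ∑ j : Fin N, Real.exp (ψ (f x) (gm (cs j)))))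
        =ᵐ[νc (cs i)] fun x => Real.log ((N:ℝ) * (Real.exp (ψ (f x) (gp (cs i)))
        / ∑ j : Fin N, Real.exp (ψ (f x) (gm (cs j))))) :=
      Eventually.of_forall fun x =>
        (Real.log_mul hNpos.ne' (hE_pos cs i x).ne').symm
    have hTi : Integrable (fun x => Real.log ((N:ℝ) * (Real.exp (ψ (f x) (gp (cs i)))
        / ∑ j : Fin N, Real.exp (ψ (f x) (gm (cs j)))))) (νc (cs i)) :=
      (((integrable_const (Real.log (N:ℝ))).add (hTint i cs)).congr hTeq)
    have hb := nwj_bound (νc (cs i)) μX (hacc (cs i))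
      (h := fun x => (N:ℝ) * (Real.exp (ψ (f x) (gp (cs i)))
        / ∑ j : Fin N, Real.exp (ψ (f x) (gm (cs j)))))
      (measurable_const.mul (hE_meas cs i))
      (fun x => mul_pos hNpos (hE_pos cs i x))
      hTi (hLint (cs i)) ((hEint cs i).const_mul (N:ℝ))
    have e1 : ∫ x, Real.log ((N:ℝ) * (Real.exp (ψ (f x) (gp (cs i)))
        / ∑ j : Fin N, Real.exp (ψ (f x) (gm (cs j))))) ∂(νc (cs i))
        = Real.log (N:ℝ) + ∫ x, Real.log (Real.exp (ψ (f x) (gp (cs i)))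
        / ∑ j : Fin N, Real.exp (ψ (f x) (gm (cs j)))) ∂(νc (cs i)) := by
      rw [← integral_congr_ae hTeq, integral_add (integrable_const _) (hTint i cs),
        integral_const]
      simp
    have e2 : ∫ x, (N:ℝ) * (Real.exp (ψ (f x) (gp (cs i)))
        / ∑ j : Fin N, Real.exp (ψ (f x) (gm (cs j)))) ∂μX
        = (N:ℝ) * ∫ x, Real.exp (ψ (f x) (gp (cs i)))
        / ∑ j : Fin N, Real.exp (ψ (f x) (gm (cs j))) ∂μX := integral_const_mul _ _
    rw [e1, e2] at hb
    linarith
  -- weight identities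
  have hwr_sum : ∑ cs : Fin N → Fin M, (πN {cs}).toReal = 1 := by
    simp_rw [hwr_prod]
    have h := Finset.prod_univ_sum (fun _ : Fin N => (Finset.univ : Finset (Fin M)))
      (fun _ c => (π {c}).toReal)
    rw [Fintype.piFinset_univ] at h
    rw [← h]
    simp [hprsum]
  have hmarg : ∀ (i : Fin N) (φ : Fin M → ℝ),
      (∑ cs : Fin N → Fin M, (πN {cs}).toReal * φ (cs i))
        = ∑ c : Fin M, (π {c}).toReal * φ c := by
    intro i φ
    classical
    set b : Fin N → Fin M → ℝ :=
      fun j c => if j = i then (π {c}).toReal * φ c else (π {c}).toReal with hbdef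
    have hterm : ∀ cs : Fin N → Fin M,
        (πN {cs}).toReal * φ (cs i) = ∏ j, b j (cs j) := by
      intro cs
      rw [hwr_prod, ← Finset.mul_prod_erase Finset.univ _ (Finset.mem_univ i),
        ← Finset.mul_prod_erase Finset.univ (fun j => b j (cs j)) (Finset.mem_univ i)]
      have h1 : b i (cs i) = (π {cs i}).toReal * φ (cs i) := by simp [hbdef]
      have h2 : ∏ j ∈ Finset.univ.erase i, b j (cs j)
          = ∏ j ∈ Finset.univ.erase i, (π {cs j}).toReal :=
        Finset.prod_congr rfl fun j hj => by simp [hbdef, (Finset.mem_erase.mp hj).1]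
      rw [h1, h2]; ring
    simp_rw [hterm]
    have hps := Finset.prod_univ_sum (fun _ : Fin N => (Finset.univ : Finset (Fin M))) b
    rw [Fintype.piFinset_univ] at hps
    rw [← hps, ← Finset.mul_prod_erase Finset.univ _ (Finset.mem_univ i)]
    have h3 : ∑ c, b i c = ∑ c, (π {c}).toReal * φ c := by simp [hbdef]
    have h4 : ∀ j ∈ Finset.univ.erase i, (∑ c, b j c) = 1 := by
      intro j hj
      simp [hbdef, (Finset.mem_erase.mp hj).1, hprsum]
    rw [h3, Finset.prod_congr rfl h4, Finset.prod_const_one, mul_one]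
  -- the averaged inequality
  have keysum : ∀ i : Fin N,
      Real.log (N:ℝ)
        + (∑ cs : Fin N → Fin M, (πN {cs}).toReal * ∫ x, Real.log
            (Real.exp (ψ (f x) (gp (cs i)))
              / ∑ j : Fin N, Real.exp (ψ (f x) (gm (cs j)))) ∂(νc (cs i)))
        - (∑ c : Fin M, (π {c}).toReal
            * ∫ x, Real.log (((νc c).rnDeriv μX x).toReal) ∂(νc c)) + 1
        ≤ (N:ℝ) * ∑ cs : Fin N → Fin M, (πN {cs}).toReal
            * ∫ x, Real.exp (ψ (f x) (gp (cs i)))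
              / ∑ j : Fin N, Real.exp (ψ (f x) (gm (cs j))) ∂μX := by
    intro i
    have h1 := Finset.sum_le_sum (s := (Finset.univ : Finset (Fin N → Fin M)))
      (fun cs _ => mul_le_mul_of_nonneg_left (key i cs)
        (ENNReal.toReal_nonneg (a := πN {cs})))
    rw [← hmarg i (fun c => ∫ x, Real.log (((νc c).rnDeriv μX x).toReal) ∂(νc c))]
    have expand : ∀ cs : Fin N → Fin M, (πN {cs}).toReal
        * (Real.log (N:ℝ) + (∫ x, Real.log (Real.exp (ψ (f x) (gp (cs i)))
            / ∑ j : Fin N, Real.exp (ψ (f x) (gm (cs j)))) ∂(νc (cs i)))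
          - (∫ x, Real.log (((νc (cs i)).rnDeriv μX x).toReal) ∂(νc (cs i))) + 1)
        = (πN {cs}).toReal * Real.log (N:ℝ)
          + (πN {cs}).toReal * (∫ x, Real.log (Real.exp (ψ (f x) (gp (cs i)))
              / ∑ j : Fin N, Real.exp (ψ (f x) (gm (cs j)))) ∂(νc (cs i)))
          - (πN {cs}).toReal * (∫ x, Real.log (((νc (cs i)).rnDeriv μX x).toReal) ∂(νc (cs i)))
          + (πN {cs}).toReal := fun cs => by ring
    simp_rw [expand] at h1
    rw [Finset.sum_add_distrib, Finset.sum_sub_distrib, Finset.sum_add_distrib,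
      ← Finset.sum_mul, hwr_sum, one_mul] at h1
    simp_rw [fun cs : Fin N → Fin M => mul_comm ((πN {cs}).toReal)
      ((N:ℝ) * ∫ x, Real.exp (ψ (f x) (gp (cs i)))
        / ∑ j : Fin N, Real.exp (ψ (f x) (gm (cs j))) ∂μX)] at h1
    simp_rw [mul_assoc] at h1
    rw [← Finset.mul_sum] at h1
    have := hmarg i (fun c => ∫ x, Real.log (((νc c).rnDeriv μX x).toReal) ∂(νc c))
    simp_rw [fun cs : Fin N → Fin M => mul_comm
      (∫ x, Real.exp (ψ (f x) (gp (cs i)))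
        / ∑ j : Fin N, Real.exp (ψ (f x) (gm (cs j))) ∂μX) ((πN {cs}).toReal)] at h1
    linarith
  -- identification of the P-integrals appearing in the statement
  have hPint : ∀ i : Fin N,
      (∫ p, -Real.log (Real.exp (ψ (f p.1) (gp (p.2 i))) /
          ∑ j : Fin N, Real.exp (ψ (f p.1) (gm (p.2 j)))) ∂(Pmeas μ X C N i))
        = -∑ cs : Fin N → Fin M, (πN {cs}).toReal
            * ∫ x, Real.log (Real.exp (ψ (f x) (gp (cs i)))
              / ∑ j : Fin N, Real.exp (ψ (f x) (gm (cs j)))) ∂(νc (cs i)) := by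
    intro i
    have h := hintP i
    rw [hP_dec i] at h
    conv_lhs => rw [hP_dec i]
    rw [integral_finset_sum_measure (fun cs _ =>
      integrable_finset_sum_measure.mp h cs (Finset.mem_univ cs)), ← Finset.sum_neg_distrib]
    refine Finset.sum_congr rfl fun cs _ => ?_
    rw [integral_smul_measure, (measurableEmbedding_prod_mk_right cs).integral_map]
    show (πN {cs}).toReal • ∫ x, -Real.log (Real.exp (ψ (f x) (gp (cs i)))
      / ∑ j : Fin N, Real.exp (ψ (f x) (gm (cs j)))) ∂(νc (cs i)) = _
    rw [integral_neg, smul_eq_mul]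
    ring
  -- identification of the Q-integral
  have hQint : (∫ p, (∑ k : Fin N, Real.exp (ψ (f p.1) (gp (p.2 k)))) /
        (∑ k : Fin N, Real.exp (ψ (f p.1) (gm (p.2 k)))) ∂(Qmeas μ X C N))
      = ∑ i : Fin N, ∑ cs : Fin N → Fin M, (πN {cs}).toReal
          * ∫ x, Real.exp (ψ (f x) (gp (cs i)))
            / ∑ j : Fin N, Real.exp (ψ (f x) (gm (cs j))) ∂μX := by
    have h := hintQ
    rw [hQ_dec] at h
    conv_lhs => rw [hQ_dec]
    rw [integral_finset_sum_measure (fun cs _ =>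
      integrable_finset_sum_measure.mp h cs (Finset.mem_univ cs))]
    rw [Finset.sum_comm]
    refine Finset.sum_congr rfl fun cs _ => ?_
    rw [integral_smul_measure, (measurableEmbedding_prod_mk_right cs).integral_map]
    show (πN {cs}).toReal • ∫ x, (∑ k : Fin N, Real.exp (ψ (f x) (gp (cs k)))) /
        (∑ k : Fin N, Real.exp (ψ (f x) (gm (cs k)))) ∂μX = _
    have e3 : (fun x => (∑ k : Fin N, Real.exp (ψ (f x) (gp (cs k)))) /
        (∑ k : Fin N, Real.exp (ψ (f x) (gm (cs k)))))
        = fun x => ∑ k : Fin N, Real.exp (ψ (f x) (gp (cs k)))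
            / ∑ j : Fin N, Real.exp (ψ (f x) (gm (cs j))) := by
      funext x
      rw [Finset.sum_div]
    rw [e3, integral_finset_sum _ (fun k _ => hEint cs k), smul_eq_mul, Finset.mul_sum]
  -- final arithmetic
  rw [hMI]
  simp_rw [hPint]
  rw [hQint, Finset.sum_neg_distrib]
  have hbig := Finset.sum_le_sum (s := (Finset.univ : Finset (Fin N)))
    (fun i _ => keysum i)
  rw [Finset.sum_add_distrib, Finset.sum_sub_distrib, Finset.sum_add_distrib,
    Finset.sum_const, Finset.sum_const, Finset.sum_const, Finset.card_univ,
    Fintype.card_fin, nsmul_eq_mul, nsmul_eq_mul, nsmul_eq_mul, mul_one,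
    ← Finset.mul_sum] at hbig
  set SA : ℝ := ∑ i : Fin N, ∑ cs : Fin N → Fin M, (πN {cs}).toReal
      * ∫ x, Real.log (Real.exp (ψ (f x) (gp (cs i)))
        / ∑ j : Fin N, Real.exp (ψ (f x) (gm (cs j)))) ∂(νc (cs i)) with hSA
  set RB : ℝ := ∑ i : Fin N, ∑ cs : Fin N → Fin M, (πN {cs}).toReal
      * ∫ x, Real.exp (ψ (f x) (gp (cs i)))
        / ∑ j : Fin N, Real.exp (ψ (f x) (gm (cs j))) ∂μX with hRB
  set MIr : ℝ := ∑ c : Fin M, (π {c}).toReal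
      * ∫ x, Real.log (((νc c).rnDeriv μX x).toReal) ∂(νc c) with hMIr
  have hNe : (N:ℝ) ≠ 0 := hNpos.ne'
  have h2 : (N:ℝ) * (1 + Real.log (N:ℝ) - (1/(N:ℝ)) * (-SA) - RB)
      = (N:ℝ) + (N:ℝ) * Real.log (N:ℝ) + SA - (N:ℝ) * RB := by
    field_simp
    ring
  have h3 : (N:ℝ) * (1 + Real.log (N:ℝ) - (1/(N:ℝ)) * (-SA) - RB) ≤ (N:ℝ) * MIr := by
    rw [h2]
    linarith [hbig]
  exact le_of_mul_le_mul_left h3 hNpos
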